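/- There do not exist e₀, e₁ ∈ ℝ² with ‖e₀ − e₁‖ ≤ 2 such that the segment with endpoints e₀ and e₁ covers each of the three points (0,0), (4,0) and (2, 1.1) within distance 1; i.e., there are no e₀, e₁ with ‖e₀ − e₁‖ ≤ 2 and t₁, t₂, t₃ ∈ [0,1] satisfying ‖e₀ + t₁·(e₁ − e₀) − (0,0)‖ ≤ 1, ‖e₀ + t₂·(e₁ − e₀) − (4,0)‖ ≤ 1 and ‖e₀ + t₃·(e₁ − e₀) − (2, 1.1)‖ ≤ 1. -/

import Mathlib

private lemma sq_sum_le_of_norm_le (v : EuclideanSpace ℝ (Fin 2)) (c : ℝ) (h : ‖v‖ ≤ c) :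
    (v 0)^2 + (v 1)^2 ≤ c^2 := by
  have h2 : ‖v‖^2 ≤ c^2 := by nlinarith [norm_nonneg v]
  have he : ‖v‖^2 = (v 0)^2 + (v 1)^2 := by
    rw [EuclideanSpace.norm_eq, Real.sq_sqrt (by positivity), Fin.sum_univ_two,
      Real.norm_eq_abs, Real.norm_eq_abs, sq_abs, sq_abs]
  linarith [he ▸ h2]

private lemma aux_tsq (t₁ t₂ : ℝ) (h10 : 0 ≤ t₁) (h11 : t₁ ≤ 1) (h20 : 0 ≤ t₂)
    (h21 : t₂ ≤ 1) : (t₂ - t₁)^2 ≤ 1 := by nlinarith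

private lemma aux_scale (s p q : ℝ) (hs : s^2 ≤ 1) (h : p^2 + q^2 ≤ 4) :
    (s * p)^2 + (s * q)^2 ≤ 4 := by
  have h1 : (0:ℝ) ≤ (1 - s^2) * p^2 := mul_nonneg (by linarith) (sq_nonneg p)
  have h2 : (0:ℝ) ≤ (1 - s^2) * q^2 := mul_nonneg (by linarith) (sq_nonneg q)
  nlinarith [sq_nonneg s]

private lemma aux_le1 (x y : ℝ) (h : x^2 + y^2 ≤ 1) : x ≤ 1 := by
  nlinarith [sq_nonneg y, sq_nonneg (x - 1)]

private lemma aux_ge3 (x y : ℝ) (h : (x - 4)^2 + y^2 ≤ 1) : 3 ≤ x := by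
  nlinarith [sq_nonneg y, sq_nonneg (x - 3)]

private lemma aux_diff2 (u v : ℝ) (h : u^2 + v^2 ≤ 4) : u ≤ 2 := by
  nlinarith [sq_nonneg v, sq_nonneg (u - 2)]

private lemma aux_y0 (x y : ℝ) (h : x^2 + y^2 ≤ 1) (hx : x^2 = 1) : y = 0 := by
  have : y^2 ≤ 0 := by linarith
  have : y^2 = 0 := le_antisymm this (sq_nonneg y)
  exact pow_eq_zero_iff (n := 2) (by norm_num) |>.mp this

private lemma aux_sge1 (s L : ℝ) (h : s * L = 4) (hL : L ≤ 4) (hs : 0 ≤ s) : 1 ≤ s := by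
  nlinarith

private lemma aux_final (x : ℝ) (h : (x - 2)^2 + (0 - 11/10)^2 ≤ 1) : False := by
  nlinarith [sq_nonneg (x - 2)]

private lemma remark3_core (a0 a1 b0 b1 t₁ t₂ t₃ : ℝ)
    (ht₁0 : 0 ≤ t₁) (ht₁1 : t₁ ≤ 1) (ht₂0 : 0 ≤ t₂) (ht₂1 : t₂ ≤ 1)
    (ht₃0 : 0 ≤ t₃) (ht₃1 : t₃ ≤ 1)
    (hE' : (a0 - b0) ^ 2 + (a1 - b1) ^ 2 ≤ 4)
    (h1' : (a0 + t₁ * (b0 - a0)) ^ 2 + (a1 + t₁ * (b1 - a1)) ^ 2 ≤ 1)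
    (h2' : (a0 + t₂ * (b0 - a0) - 4) ^ 2 + (a1 + t₂ * (b1 - a1)) ^ 2 ≤ 1)
    (h3' : (a0 + t₃ * (b0 - a0) - 2) ^ 2 + (a1 + t₃ * (b1 - a1) - 11 / 10) ^ 2 ≤ 1) :
    False := by
  set x1 : ℝ := a0 + t₁ * (b0 - a0) with hx1
  set y1 : ℝ := a1 + t₁ * (b1 - a1) with hy1
  set x2 : ℝ := a0 + t₂ * (b0 - a0) with hx2
  set y2 : ℝ := a1 + t₂ * (b1 - a1) with hy2
  have e1 : x2 - x1 = (t₂ - t₁) * (b0 - a0) := by rw [hx1, hx2]; ring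
  have e2 : y2 - y1 = (t₂ - t₁) * (b1 - a1) := by rw [hy1, hy2]; ring
  have esq : (x2 - x1)^2 + (y2 - y1)^2 = (t₂ - t₁)^2 * ((a0 - b0)^2 + (a1 - b1)^2) := by
    rw [e1, e2]; ring
  clear_value x1 y1 x2 y2
  have ht : (t₂ - t₁)^2 ≤ 1 := aux_tsq t₁ t₂ ht₁0 ht₁1 ht₂0 ht₂1
  have hseg : (x2 - x1)^2 + (y2 - y1)^2 ≤ 4 := by
    rw [e1, e2]
    exact aux_scale _ _ _ ht (by linarith [hE', sq_nonneg (a0-b0), sq_nonneg (a1-b1), neg_sub a0 b0, neg_sub a1 b1, neg_pow (a0-b0) 2] )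
  have hx1le : x1 ≤ 1 := aux_le1 _ _ h1'
  have hx2ge : 3 ≤ x2 := aux_ge3 _ _ h2'
  have hd : x2 - x1 ≤ 2 := aux_diff2 _ _ hseg
  have hx1e : x1 = 1 := by linarith
  have hx2e : x2 = 3 := by linarith
  have hy1e : y1 = 0 := aux_y0 _ _ h1' (by rw [hx1e]; norm_num)
  have hy2e : y2 = 0 := by
    refine aux_y0 (x2 - 4) y2 ?_ (by rw [hx2e]; norm_num)
    linarith [h2']
  have hfour : (t₂ - t₁)^2 * ((a0 - b0)^2 + (a1 - b1)^2) = 4 := by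
    rw [← esq, hx1e, hx2e, hy1e, hy2e]; norm_num
  have htsq : 1 ≤ (t₂ - t₁)^2 :=
    aux_sge1 _ _ hfour hE' (sq_nonneg _)
  have htsq' : (t₂ - t₁)^2 = 1 := le_antisymm ht htsq
  have hb1a1 : b1 = a1 := by
    have h0 : (t₂ - t₁)^2 * (b1 - a1)^2 = 0 := by
      have : ((t₂ - t₁) * (b1 - a1))^2 = 0 := by rw [← e2, hy1e, hy2e]; norm_num
      calc (t₂ - t₁)^2 * (b1 - a1)^2 = ((t₂ - t₁) * (b1 - a1))^2 := by ring
        _ = 0 := this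
    rw [htsq', one_mul] at h0
    have := pow_eq_zero_iff (n := 2) (by norm_num) |>.mp h0
    linarith
  have ha1e : a1 = 0 := by
    have hy1a : y1 = a1 := by rw [hy1, hb1a1]; ring
    rw [hy1e] at hy1a; linarith
  have hy3 : a1 + t₃ * (b1 - a1) = 0 := by rw [hb1a1, ha1e]; ring
  rw [hy3] at h3'
  exact aux_final _ h3'

/-- **Remark 3.** No line segment of length at most `2` covers each of the points `(0,0)`,
`(4,0)` and `(2, 1.1)` within distance `1`. -/
theorem no_segment_covers_triple :
    ¬ ∃ e₀ e₁ : EuclideanSpace ℝ (Fin 2), ‖e₀ - e₁‖ ≤ 2 ∧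
        (∃ t₁ ∈ Set.Icc (0 : ℝ) 1,
          ‖e₀ + t₁ • (e₁ - e₀) - (EuclideanSpace.equiv (Fin 2) ℝ).symm ![0, 0]‖ ≤ 1) ∧
        (∃ t₂ ∈ Set.Icc (0 : ℝ) 1,
          ‖e₀ + t₂ • (e₁ - e₀) - (EuclideanSpace.equiv (Fin 2) ℝ).symm ![4, 0]‖ ≤ 1) ∧
        (∃ t₃ ∈ Set.Icc (0 : ℝ) 1,
          ‖e₀ + t₃ • (e₁ - e₀) - (EuclideanSpace.equiv (Fin 2) ℝ).symm ![2, 1.1]‖ ≤ 1) := by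
  rintro ⟨e₀, e₁, hE, ⟨t₁, ⟨ht₁0, ht₁1⟩, h1⟩, ⟨t₂, ⟨ht₂0, ht₂1⟩, h2⟩,
    ⟨t₃, ⟨ht₃0, ht₃1⟩, h3⟩⟩
  have hE' := sq_sum_le_of_norm_le _ _ hE
  have h1' := sq_sum_le_of_norm_le _ _ h1
  have h2' := sq_sum_le_of_norm_le _ _ h2
  have h3' := sq_sum_le_of_norm_le _ _ h3
  simp only [PiLp.add_apply, PiLp.sub_apply, PiLp.smul_apply, smul_eq_mul,
    EuclideanSpace.equiv, WithLp.equiv_symm_apply, PiLp.toLp_apply, Matrix.cons_val_zero,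
    Matrix.cons_val_one, Matrix.head_cons] at hE' h1' h2' h3'
  norm_num at hE' h1' h2' h3'
  exact remark3_core (e₀ 0) (e₀ 1) (e₁ 0) (e₁ 1) t₁ t₂ t₃
    ht₁0 ht₁1 ht₂0 ht₂1 ht₃0 ht₃1 hE' h1' h2' h3'
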